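/- Let $f_1,\ldots,f_q\in L^2(\Omega,\nu)$ where $(\Omega,\nu)=\prod_{i=1}^n(\Omega_i,\nu_i)$ is a finite product probability space with $\min$-atom probabilities $p_i$ and $\sigma_i=\sqrt{p_i(1-p_i)}$. Suppose $f_j$ depends only on the coordinates in $S_j\subset[n]$. For $i\ge 3$ let $T_i$ be the set of coordinates covered exactly $i$ times by $S_1,\ldots,S_q$, and set $\sigma_T=\prod_{t\in T}\sigma_t$. Then $|\mathbb{E}[\prod_{j=1}^q f_j]|\le \prod_{j=1}^q\|f_j\|_2\cdot\prod_{i=3}^q \sigma_{T_i}^{2-i}$. -/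

import Mathlib

open Finset

universe u

private lemma cs2 {α : Type*} [Fintype α] (ν v w : α → ℝ) (hν : ∀ a, 0 ≤ ν a) :
    ∑ a, ν a * (v a * w a) ≤
      Real.sqrt (∑ a, ν a * v a ^ 2) * Real.sqrt (∑ a, ν a * w a ^ 2) := by
  have h : ∀ a, ν a * (v a * w a) = (Real.sqrt (ν a) * v a) * (Real.sqrt (ν a) * w a) := by
    intro a
    rw [show (Real.sqrt (ν a) * v a) * (Real.sqrt (ν a) * w a)
        = (Real.sqrt (ν a) * Real.sqrt (ν a)) * (v a * w a) by ring,
      Real.mul_self_sqrt (hν a)]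
  calc ∑ a, ν a * (v a * w a)
      = ∑ a, (Real.sqrt (ν a) * v a) * (Real.sqrt (ν a) * w a) := by
        exact Finset.sum_congr rfl fun a _ => h a
    _ ≤ Real.sqrt (∑ a, (Real.sqrt (ν a) * v a) ^ 2) *
        Real.sqrt (∑ a, (Real.sqrt (ν a) * w a) ^ 2) :=
        Real.sum_mul_le_sqrt_mul_sqrt _ _ _
    _ = Real.sqrt (∑ a, ν a * v a ^ 2) * Real.sqrt (∑ a, ν a * w a ^ 2) := by
        have e1 : ∀ a : α, (Real.sqrt (ν a) * v a) ^ 2 = ν a * v a ^ 2 := fun a => by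
          rw [mul_pow, Real.sq_sqrt (hν a)]
        have e2 : ∀ a : α, (Real.sqrt (ν a) * w a) ^ 2 = ν a * w a ^ 2 := fun a => by
          rw [mul_pow, Real.sq_sqrt (hν a)]
        rw [Finset.sum_congr rfl fun a _ => e1 a, Finset.sum_congr rfl fun a _ => e2 a]

private lemma oneDim {α : Type*} [Fintype α] {ι : Type*} [DecidableEq ι]
    (ν : α → ℝ) (σ : ℝ) (hσ : 0 < σ)
    (hν : ∀ a, σ ^ 2 ≤ ν a) (hsum : ∑ a, ν a = 1)
    (J : Finset ι) (u : ι → α → ℝ) (hu : ∀ j a, 0 ≤ u j a) :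
    ∑ a, ν a * ∏ j ∈ J, u j a ≤
      σ ^ (min 0 (2 - (J.card : ℤ))) * ∏ j ∈ J, Real.sqrt (∑ a, ν a * u j a ^ 2) := by
  have hν0 : ∀ a, 0 ≤ ν a := fun a => le_trans (sq_nonneg σ) (hν a)
  set N : ι → ℝ := fun j => Real.sqrt (∑ a, ν a * u j a ^ 2) with hN
  have hN0 : ∀ j, 0 ≤ N j := fun j => Real.sqrt_nonneg _
  have hbound : ∀ j a, u j a ≤ N j / σ := by
    intro j a
    rw [le_div_iff₀ hσ]
    have h1 : (u j a * σ) ^ 2 ≤ ∑ a', ν a' * u j a' ^ 2 := by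
      calc (u j a * σ) ^ 2 = σ ^ 2 * u j a ^ 2 := by ring
        _ ≤ ν a * u j a ^ 2 := mul_le_mul_of_nonneg_right (hν a) (sq_nonneg _)
        _ ≤ ∑ a', ν a' * u j a' ^ 2 :=
            Finset.single_le_sum (fun a' _ => mul_nonneg (hν0 a') (sq_nonneg _)) (mem_univ a)
    calc u j a * σ = Real.sqrt ((u j a * σ) ^ 2) :=
          (Real.sqrt_sq (mul_nonneg (hu j a) hσ.le)).symm
      _ ≤ N j := Real.sqrt_le_sqrt h1
  rcases hc : J.card with _ | m
  · -- J = ∅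
    have hJe : J = ∅ := Finset.card_eq_zero.mp hc
    subst hJe
    simp [hsum]
  · rcases m with _ | k
    · -- J = {j}
      obtain ⟨j, rfl⟩ := Finset.card_eq_one.mp hc
      simp only [Finset.prod_singleton, Nat.cast_one]
      have h2 := cs2 ν (u j) (fun _ => 1) hν0
      simp only [mul_one, one_pow, hsum, Real.sqrt_one] at h2
      norm_num
      exact h2
    · -- J.card = k + 2
      have hne : J.Nonempty := Finset.card_pos.mp (by omega)
      obtain ⟨j1, hj1⟩ := hne
      have hce : (J.erase j1).card = k + 1 := by
        rw [Finset.card_erase_of_mem hj1]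
        omega
      obtain ⟨j2, hj2⟩ : (J.erase j1).Nonempty := Finset.card_pos.mp (by omega)
      set R := (J.erase j1).erase j2 with hRdef
      have hRcard : R.card = k := by
        rw [hRdef, Finset.card_erase_of_mem hj2]
        omega
      have hsplitJ : ∀ v : ι → ℝ, ∏ j ∈ J, v j = v j1 * (v j2 * ∏ j ∈ R, v j) := by
        intro v
        rw [hRdef, Finset.mul_prod_erase _ _ hj2, Finset.mul_prod_erase _ _ hj1]
      set C : ℝ := ∏ j ∈ R, (N j / σ) with hC
      have hC0 : 0 ≤ C := Finset.prod_nonneg fun j _ => div_nonneg (hN0 j) hσ.le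
      have step1 : ∑ a, ν a * ∏ j ∈ J, u j a ≤ C * ∑ a, ν a * (u j1 a * u j2 a) := by
        rw [Finset.mul_sum]
        apply Finset.sum_le_sum
        intro a _
        rw [hsplitJ (fun j => u j a)]
        have hprodR : ∏ j ∈ R, u j a ≤ C :=
          Finset.prod_le_prod (fun j _ => hu j a) (fun j _ => hbound j a)
        calc ν a * (u j1 a * (u j2 a * ∏ j ∈ R, u j a))
            ≤ ν a * (u j1 a * (u j2 a * C)) := by
              apply mul_le_mul_of_nonneg_left _ (hν0 a)
              apply mul_le_mul_of_nonneg_left _ (hu j1 a)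
              exact mul_le_mul_of_nonneg_left hprodR (hu j2 a)
          _ = C * (ν a * (u j1 a * u j2 a)) := by ring
      have step2 : ∑ a, ν a * (u j1 a * u j2 a) ≤ N j1 * N j2 := cs2 ν (u j1) (u j2) hν0
      have hexp : min 0 (2 - ((k + 1 + 1 : ℕ) : ℤ)) = -(k : ℤ) := by push_cast; omega
      rw [hexp]
      have hfinal : C * (N j1 * N j2) = σ ^ (-(k : ℤ)) * ∏ j ∈ J, N j := by
        rw [hsplitJ N, hC, Finset.prod_div_distrib, Finset.prod_const, hRcard,
          zpow_neg, zpow_natCast]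
        field_simp
      calc ∑ a, ν a * ∏ j ∈ J, u j a ≤ C * ∑ a, ν a * (u j1 a * u j2 a) := step1
        _ ≤ C * (N j1 * N j2) := mul_le_mul_of_nonneg_left step2 hC0
        _ = σ ^ (-(k : ℤ)) * ∏ j ∈ J, N j := hfinal

private lemma aux (n : ℕ) : ∀ (Ω : Fin n → Type u) [∀ i, Fintype (Ω i)]
    (ν : ∀ i, Ω i → ℝ) (σ : Fin n → ℝ) {q : ℕ}
    (g : Fin q → (∀ i, Ω i) → ℝ) (S : Fin q → Finset (Fin n)),
    (∀ i, 0 < σ i) → (∀ i x, σ i ^ 2 ≤ ν i x) → (∀ i, ∑ x, ν i x = 1) →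
    (∀ j x, 0 ≤ g j x) → (∀ j x y, (∀ i ∈ S j, x i = y i) → g j x = g j y) →
    ∑ x, (∏ i, ν i (x i)) * ∏ j, g j x ≤
      (∏ i, σ i ^ (min 0 (2 - ((univ.filter fun j => i ∈ S j).card : ℤ)))) *
        ∏ j, Real.sqrt (∑ x, (∏ i, ν i (x i)) * g j x ^ 2) := by
  induction n with
  | zero =>
    intro Ω inst ν σ q g S hσ hν hsum hg hdep
    haveI : Unique (∀ i : Fin 0, Ω i) :=
      ⟨⟨fun i => i.elim0⟩, fun x => funext fun i => i.elim0⟩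
    simp only [Fintype.sum_unique, Finset.univ_eq_empty (α := Fin 0), Finset.prod_empty,
      one_mul]
    exact le_of_eq (Finset.prod_congr rfl fun j _ => (Real.sqrt_sq (hg j default)).symm)
  | succ n IH =>
    intro Ω inst ν σ q g S hσ hν hsum hg hdep
    classical
    have hν0 : ∀ i x, 0 ≤ ν i x := fun i x => le_trans (sq_nonneg _) (hν i x)
    have hne : Nonempty (Ω 0) := by
      by_contra hcon
      rw [not_nonempty_iff] at hcon
      have h1 := hsum 0
      rw [Finset.univ_eq_empty, Finset.sum_empty] at h1
      norm_num at h1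
    obtain ⟨a₀⟩ := hne
    set h : Fin q → (∀ i : Fin n, Ω i.succ) → ℝ := fun j y =>
      if (0 : Fin (n + 1)) ∈ S j then
        Real.sqrt (∑ a, ν 0 a * (g j (Fin.cons a y)) ^ 2)
      else g j (Fin.cons a₀ y) with hhdef
    set S' : Fin q → Finset (Fin n) := fun j => univ.filter fun i => i.succ ∈ S j with hS'def
    have hmemS' : ∀ (j : Fin q) (i : Fin n), i ∈ S' j ↔ i.succ ∈ S j := by
      intro j i
      rw [hS'def]
      simp
    have hsplit : ∀ F : (∀ i, Ω i) → ℝ,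
        ∑ x, F x = ∑ a : Ω 0, ∑ y : ∀ i : Fin n, Ω i.succ, F (Fin.cons a y) := by
      intro F
      rw [← Equiv.sum_comp (Fin.consEquiv Ω) F, Fintype.sum_prod_type]
      rfl
    have hprodν : ∀ (a : Ω 0) (y : ∀ i : Fin n, Ω i.succ),
        (∏ i, ν i (Fin.cons a y i)) = ν 0 a * ∏ i, ν i.succ (y i) := by
      intro a y
      rw [Fin.prod_univ_succ]
      simp
    have hg_indep : ∀ j, (0 : Fin (n + 1)) ∉ S j → ∀ (a : Ω 0) y,
        g j (Fin.cons a y) = g j (Fin.cons a₀ y) := by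
      intro j hj a y
      apply hdep
      intro i hi
      rcases Fin.eq_zero_or_eq_succ i with rfl | ⟨i', rfl⟩
      · exact absurd hi hj
      · simp
    have hh0 : ∀ j y, 0 ≤ h j y := by
      intro j y
      rw [hhdef]
      dsimp only
      split
      · exact Real.sqrt_nonneg _
      · exact hg j _
    have hhdep2 : ∀ j y z, (∀ i ∈ S' j, y i = z i) → h j y = h j z := by
      intro j y z hyz
      have hgc : ∀ a, g j (Fin.cons a y) = g j (Fin.cons a z) := by
        intro a
        apply hdep
        intro i hi
        rcases Fin.eq_zero_or_eq_succ i with rfl | ⟨i', rfl⟩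
        · simp
        · simp only [Fin.cons_succ]
          exact hyz i' ((hmemS' j i').mpr hi)
      rw [hhdef]
      dsimp only
      simp only [hgc]
    -- pointwise inequality
    have hpoint : ∀ y : ∀ i : Fin n, Ω i.succ,
        ∑ a, ν 0 a * ∏ j, g j (Fin.cons a y) ≤
          σ 0 ^ (min 0 (2 - ((univ.filter fun j => (0 : Fin (n+1)) ∈ S j).card : ℤ))) *
            ∏ j, h j y := by
      intro y
      set J : Finset (Fin q) := univ.filter fun j => (0 : Fin (n+1)) ∈ S j with hJ
      have hfac : ∀ a : Ω 0, ∏ j, g j (Fin.cons a y) =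
          (∏ j ∈ J, g j (Fin.cons a y)) * ∏ j ∈ Jᶜ, g j (Fin.cons a₀ y) := by
        intro a
        rw [← Finset.prod_mul_prod_compl J (fun j => g j (Fin.cons a y))]
        congr 1
        apply Finset.prod_congr rfl
        intro j hj
        have hj0 : (0 : Fin (n+1)) ∉ S j := by
          rw [Finset.mem_compl, hJ] at hj
          simpa using hj
        exact hg_indep j hj0 a y
      have h1d := oneDim (ν 0) (σ 0) (hσ 0) (fun a => hν 0 a) (hsum 0) J
        (fun j a => g j (Fin.cons a y)) (fun j a => hg j _)
      calc ∑ a, ν 0 a * ∏ j, g j (Fin.cons a y)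
          = (∑ a, ν 0 a * ∏ j ∈ J, g j (Fin.cons a y)) * ∏ j ∈ Jᶜ, g j (Fin.cons a₀ y) := by
            rw [Finset.sum_mul]
            apply Finset.sum_congr rfl
            intro a _
            rw [hfac a]
            ring
        _ ≤ (σ 0 ^ (min 0 (2 - (J.card : ℤ))) *
              ∏ j ∈ J, Real.sqrt (∑ a, ν 0 a * g j (Fin.cons a y) ^ 2)) *
            ∏ j ∈ Jᶜ, g j (Fin.cons a₀ y) := by
            exact mul_le_mul_of_nonneg_right h1d (Finset.prod_nonneg fun j _ => hg j _)
        _ = σ 0 ^ (min 0 (2 - (J.card : ℤ))) * ∏ j, h j y := by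
            rw [mul_assoc]
            congr 1
            rw [← Finset.prod_mul_prod_compl J (fun j => h j y)]
            congr 1
            · apply Finset.prod_congr rfl
              intro j hj
              have hj0 : (0 : Fin (n+1)) ∈ S j := by
                rw [hJ] at hj; simpa using hj
              rw [hhdef]
              dsimp only
              rw [if_pos hj0]
            · apply Finset.prod_congr rfl
              intro j hj
              have hj0 : (0 : Fin (n+1)) ∉ S j := by
                rw [Finset.mem_compl, hJ] at hj; simpa using hj
              rw [hhdef]
              dsimp only
              rw [if_neg hj0]
    -- norm identity
    have hnorm : ∀ j, ∑ y : ∀ i : Fin n, Ω i.succ, (∏ i, ν i.succ (y i)) * (h j y) ^ 2 =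
        ∑ x, (∏ i, ν i (x i)) * (g j x) ^ 2 := by
      intro j
      rw [hsplit (fun x => (∏ i, ν i (x i)) * (g j x) ^ 2), Finset.sum_comm]
      apply Finset.sum_congr rfl
      intro y _
      have hterm : ∀ a : Ω 0, (∏ i, ν i (Fin.cons a y i)) * (g j (Fin.cons a y)) ^ 2 =
          ν 0 a * ((∏ i, ν i.succ (y i)) * (g j (Fin.cons a y)) ^ 2) := by
        intro a; rw [hprodν a y]; ring
      rw [Finset.sum_congr rfl fun a _ => hterm a]
      by_cases h0 : (0 : Fin (n+1)) ∈ S j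
      · rw [hhdef]
        dsimp only
        rw [if_pos h0, Real.sq_sqrt (Finset.sum_nonneg fun a _ =>
          mul_nonneg (hν0 0 a) (sq_nonneg _)), Finset.mul_sum]
        apply Finset.sum_congr rfl
        intro a _
        ring
      · rw [hhdef]
        dsimp only
        rw [if_neg h0]
        have : ∀ a : Ω 0, ν 0 a * ((∏ i, ν i.succ (y i)) * (g j (Fin.cons a y)) ^ 2) =
            ν 0 a * ((∏ i, ν i.succ (y i)) * (g j (Fin.cons a₀ y)) ^ 2) := by
          intro a; rw [hg_indep j h0 a y]
        rw [Finset.sum_congr rfl fun a _ => this a, ← Finset.sum_mul, hsum 0, one_mul]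
    -- apply IH
    have hIH := IH (fun i => Ω i.succ) (fun i => ν i.succ) (fun i => σ i.succ) h S'
      (fun i => hσ i.succ) (fun i x => hν i.succ x) (fun i => hsum i.succ) hh0 hhdep2
    -- coverage match
    have hcov : ∀ i : Fin n, (univ.filter fun j => i ∈ S' j).card =
        (univ.filter fun j => i.succ ∈ S j).card := by
      intro i
      congr 1
      apply Finset.filter_congr
      intro j _
      simp only [hmemS']
    -- main chain
    calc ∑ x, (∏ i, ν i (x i)) * ∏ j, g j x
        = ∑ y : ∀ i : Fin n, Ω i.succ, (∏ i, ν i.succ (y i)) *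
            ∑ a, ν 0 a * ∏ j, g j (Fin.cons a y) := by
          rw [hsplit (fun x => (∏ i, ν i (x i)) * ∏ j, g j x), Finset.sum_comm]
          apply Finset.sum_congr rfl
          intro y _
          rw [Finset.mul_sum]
          apply Finset.sum_congr rfl
          intro a _
          rw [hprodν a y]
          ring
      _ ≤ ∑ y : ∀ i : Fin n, Ω i.succ, (∏ i, ν i.succ (y i)) *
            (σ 0 ^ (min 0 (2 - ((univ.filter fun j => (0 : Fin (n+1)) ∈ S j).card : ℤ))) *
              ∏ j, h j y) := by
          apply Finset.sum_le_sum
          intro y _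
          exact mul_le_mul_of_nonneg_left (hpoint y)
            (Finset.prod_nonneg fun i _ => hν0 i.succ (y i))
      _ = σ 0 ^ (min 0 (2 - ((univ.filter fun j => (0 : Fin (n+1)) ∈ S j).card : ℤ))) *
            ∑ y : ∀ i : Fin n, Ω i.succ, (∏ i, ν i.succ (y i)) * ∏ j, h j y := by
          rw [Finset.mul_sum]
          apply Finset.sum_congr rfl
          intro y _
          ring
      _ ≤ σ 0 ^ (min 0 (2 - ((univ.filter fun j => (0 : Fin (n+1)) ∈ S j).card : ℤ))) *
            ((∏ i : Fin n, σ i.succ ^ (min 0 (2 - ((univ.filter fun j => i ∈ S' j).card : ℤ)))) *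
              ∏ j, Real.sqrt (∑ y : ∀ i : Fin n, Ω i.succ, (∏ i, ν i.succ (y i)) * h j y ^ 2)) := by
          exact mul_le_mul_of_nonneg_left hIH (zpow_nonneg (hσ 0).le _)
      _ = (∏ i, σ i ^ (min 0 (2 - ((univ.filter fun j => i ∈ S j).card : ℤ)))) *
            ∏ j, Real.sqrt (∑ x, (∏ i, ν i (x i)) * g j x ^ 2) := by
          rw [← mul_assoc]
          congr 1
          · rw [Fin.prod_univ_succ (f := fun i : Fin (n+1) =>
              σ i ^ (min 0 (2 - ((univ.filter fun j => i ∈ S j).card : ℤ))))]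
            congr 1
            apply Finset.prod_congr rfl
            intro i _
            rw [hcov i]
          · apply Finset.prod_congr rfl
            intro j _
            rw [hnorm j]

theorem stmt3 {n q : ℕ} (Ω : Fin n → Type*) [∀ i, Fintype (Ω i)]
    (ν : ∀ i, Ω i → ℝ) (p : Fin n → ℝ)
    (hp : ∀ i, 0 < p i ∧ p i ≤ 1 / 2)
    (hν : ∀ i x, p i ≤ ν i x) (hsum : ∀ i, ∑ x, ν i x = 1)
    (f : Fin q → (∀ i, Ω i) → ℝ) (S : Fin q → Finset (Fin n))
    (hdep : ∀ j x y, (∀ i ∈ S j, x i = y i) → f j x = f j y) :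
    |∑ x : ∀ i, Ω i, (∏ i, ν i (x i)) * ∏ j, f j x| ≤
      (∏ j, Real.sqrt (∑ x : ∀ i, Ω i, (∏ i, ν i (x i)) * (f j x) ^ 2)) *
        ∏ k ∈ Finset.Icc 3 q,
          (∏ t ∈ Finset.univ.filter
              (fun t : Fin n => (Finset.univ.filter (fun j : Fin q => t ∈ S j)).card = k),
            Real.sqrt (p t * (1 - p t))) ^ ((2 : ℝ) - k) := by
  classical
  set σ : Fin n → ℝ := fun i => Real.sqrt (p i * (1 - p i)) with hσdef
  have hσpos : ∀ i, 0 < σ i := fun i =>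
    Real.sqrt_pos.mpr (mul_pos (hp i).1 (by linarith [(hp i).2]))
  have hσsq : ∀ i x, σ i ^ 2 ≤ ν i x := by
    intro i x
    rw [hσdef]
    dsimp only
    rw [Real.sq_sqrt (le_of_lt (mul_pos (hp i).1 (by linarith [(hp i).2])))]
    nlinarith [(hp i).1, (hp i).2, hν i x]
  have hν0 : ∀ i x, 0 ≤ ν i x := fun i x => le_trans (hp i).1.le (hν i x)
  set c : Fin n → ℕ := fun t => (univ.filter fun j : Fin q => t ∈ S j).card with hcdef
  have habs : |∑ x : ∀ i, Ω i, (∏ i, ν i (x i)) * ∏ j, f j x| ≤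
      ∑ x : ∀ i, Ω i, (∏ i, ν i (x i)) * ∏ j, |f j x| := by
    refine (Finset.abs_sum_le_sum_abs _ _).trans (le_of_eq (Finset.sum_congr rfl fun x _ => ?_))
    rw [abs_mul, abs_of_nonneg (Finset.prod_nonneg fun i _ => hν0 i (x i)), Finset.abs_prod]
  have key := aux n Ω ν σ (fun j x => |f j x|) S hσpos hσsq hsum
    (fun j x => abs_nonneg _) (fun j x y hxy => by rw [hdep j x y hxy])
  have hsq : ∀ j, ∑ x : ∀ i, Ω i, (∏ i, ν i (x i)) * |f j x| ^ 2 =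
      ∑ x : ∀ i, Ω i, (∏ i, ν i (x i)) * (f j x) ^ 2 :=
    fun j => Finset.sum_congr rfl fun x _ => by rw [sq_abs]
  -- factor conversion
  have hcle : ∀ t, c t ≤ q := by
    intro t
    calc c t ≤ (univ : Finset (Fin q)).card := Finset.card_filter_le _ _
      _ = q := by rw [Finset.card_univ, Fintype.card_fin]
  have hfac : (∏ i, σ i ^ (min 0 (2 - (c i : ℤ)))) =
      ∏ k ∈ Finset.Icc 3 q,
        (∏ t ∈ Finset.univ.filter (fun t : Fin n => c t = k), σ t) ^ ((2 : ℝ) - k) := by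
    have hrpow : ∀ k ∈ Finset.Icc 3 q,
        (∏ t ∈ Finset.univ.filter (fun t : Fin n => c t = k), σ t) ^ ((2 : ℝ) - k) =
          ∏ t ∈ Finset.univ.filter (fun t : Fin n => c t = k),
            σ t ^ (min 0 (2 - (c t : ℤ))) := by
      intro k hk
      rw [Finset.mem_Icc] at hk
      have h2 : ((2 : ℝ) - k) = ((2 - (k : ℤ) : ℤ) : ℝ) := by push_cast; ring
      rw [h2, Real.rpow_intCast, ← Finset.prod_zpow]
      apply Finset.prod_congr rfl
      intro t ht
      rw [Finset.mem_filter] at ht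
      have : min 0 (2 - (c t : ℤ)) = 2 - (k : ℤ) := by
        rw [ht.2]; omega
      rw [this]
    rw [Finset.prod_congr rfl hrpow]
    have hmaps : ∀ t ∈ Finset.univ.filter (fun t : Fin n => 3 ≤ c t), c t ∈ Finset.Icc 3 q := by
      intro t ht
      rw [Finset.mem_filter] at ht
      rw [Finset.mem_Icc]
      exact ⟨ht.2, hcle t⟩
    have hfib := Finset.prod_fiberwise_of_maps_to hmaps
      (fun t => σ t ^ (min 0 (2 - (c t : ℤ))))
    have hinner : ∀ k ∈ Finset.Icc 3 q,
        (∏ t ∈ (Finset.univ.filter (fun t : Fin n => 3 ≤ c t)).filter (fun t => c t = k),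
          σ t ^ (min 0 (2 - (c t : ℤ)))) =
        ∏ t ∈ Finset.univ.filter (fun t : Fin n => c t = k),
          σ t ^ (min 0 (2 - (c t : ℤ))) := by
      intro k hk
      rw [Finset.mem_Icc] at hk
      congr 1
      rw [Finset.filter_filter]
      apply Finset.filter_congr
      intro t _
      constructor
      · rintro ⟨_, h⟩; exact h
      · intro h; exact ⟨by omega, h⟩
    rw [← Finset.prod_congr rfl hinner, hfib]
    rw [← Finset.prod_filter_mul_prod_filter_not univ (fun t : Fin n => 3 ≤ c t)
      (fun t => σ t ^ (min 0 (2 - (c t : ℤ))))]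
    have hone : ∏ t ∈ Finset.univ.filter (fun t : Fin n => ¬ 3 ≤ c t),
        σ t ^ (min 0 (2 - (c t : ℤ))) = 1 := by
      apply Finset.prod_eq_one
      intro t ht
      rw [Finset.mem_filter] at ht
      have : min 0 (2 - (c t : ℤ)) = 0 := by omega
      rw [this, zpow_zero]
    rw [hone, mul_one]
  calc |∑ x : ∀ i, Ω i, (∏ i, ν i (x i)) * ∏ j, f j x|
      ≤ ∑ x : ∀ i, Ω i, (∏ i, ν i (x i)) * ∏ j, |f j x| := habs
    _ ≤ (∏ i, σ i ^ (min 0 (2 - (c i : ℤ)))) *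
          ∏ j, Real.sqrt (∑ x : ∀ i, Ω i, (∏ i, ν i (x i)) * |f j x| ^ 2) := key
    _ = (∏ j, Real.sqrt (∑ x : ∀ i, Ω i, (∏ i, ν i (x i)) * (f j x) ^ 2)) *
        ∏ k ∈ Finset.Icc 3 q,
          (∏ t ∈ Finset.univ.filter
              (fun t : Fin n => (Finset.univ.filter (fun j : Fin q => t ∈ S j)).card = k),
            Real.sqrt (p t * (1 - p t))) ^ ((2 : ℝ) - k) := by
      rw [hfac, mul_comm]
      congr 1
      apply Finset.prod_congr rfl
      intro j _
      rw [hsq j]
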